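/- Zero-energy states of the Kitaev Hamiltonian encode accepting computations: Let W = ⨂_{j=1}^N ℂ², let U_1, …, U_T be unitaries on W, let A_in, A_out ⊆ {1, …, N}, and for a qubit j let P_j denote the orthogonal projector onto |1⟩ on qubit j (tensored with the identity elsewhere). On ℂ^{T+1} ⊗ W set H = H_i + H_p + H_o, where H_p is the propagation Hamiltonian built from U_1, …, U_T, H_i = |0⟩⟨0| ⊗ Σ_{j ∈ A_in} P_j and H_o = |T⟩⟨T| ⊗ Σ_{j ∈ A_out} P_j. Then ker H ≠ {0} if and only if there exists a nonzero ξ ∈ W with P_j ξ = 0 for all j ∈ A_in and P_j (U_T ⋯ U_1 ξ) = 0 for all j ∈ A_out; moreover, the zero-energy states of H are exactly the history states (T+1)^{−1/2} Σ_{t=0}^T |t⟩ ⊗ U_t ⋯ U_1 ξ of such ξ. -/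

import Mathlib

open scoped BigOperators

noncomputable section

/-- The `N`-qubit Hilbert space `W = ⨂_{j=1}^N ℂ²`, realized as
`ℓ²`-functions on the set of computational basis configurations. -/
abbrev QubitSpace (N : ℕ) := EuclideanSpace ℂ (Fin N → Fin 2)

/-- The orthogonal projector onto `|1⟩` on qubit `j` (tensored with the identity on
the remaining qubits). -/
def qubitOneProj (N : ℕ) (j : Fin N) : QubitSpace N →ₗ[ℂ] QubitSpace N where
  toFun ψ := WithLp.toLp 2 (fun σ => if σ j = 1 then ψ σ else 0)
  map_add' ψ χ := by
    ext σ
    by_cases h : σ j = 1 <;> simp [h]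
  map_smul' a ψ := by
    ext σ
    by_cases h : σ j = 1 <;> simp [h]

/-- `histFun T U t` is the composite `U_t ∘ U_{t-1} ∘ ⋯ ∘ U_1` of the first `t`
circuit unitaries (the empty composite for `t = 0` being the identity). -/
def histFun {W : Type*} [NormedAddCommGroup W] [InnerProductSpace ℂ W]
    (T : ℕ) (U : Fin T → (W ≃ₗᵢ[ℂ] W)) : ℕ → W → W
  | 0 => id
  | n + 1 => if h : n < T then (fun w => U ⟨n, h⟩ (histFun T U n w)) else histFun T U n

/-- Feynman–Kitaev propagation Hamiltonian
`H_p = (1/2) ∑_{t=0}^{T-1} [(|t⟩⟨t| + |t+1⟩⟨t+1|) ⊗ 1 - |t+1⟩⟨t| ⊗ U_{t+1} - |t⟩⟨t+1| ⊗ U_{t+1}†]`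
acting on `ℂ^{T+1} ⊗ W`, realized as the space of functions `Fin (T+1) → W`. -/
def propHam {W : Type*} [NormedAddCommGroup W] [InnerProductSpace ℂ W]
    (T : ℕ) (U : Fin T → (W ≃ₗᵢ[ℂ] W)) :
    ((Fin (T + 1) → W) →ₗ[ℂ] (Fin (T + 1) → W)) :=
  (2 : ℂ)⁻¹ • ∑ t : Fin T,
    ((LinearMap.single ℂ (fun _ : Fin (T + 1) => W) t.castSucc) ∘ₗ
        ((LinearMap.proj t.castSucc : (∀ _ : Fin (T + 1), W) →ₗ[ℂ] W) -
          ((U t).symm.toLinearEquiv.toLinearMap ∘ₗ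
            (LinearMap.proj t.succ : (∀ _ : Fin (T + 1), W) →ₗ[ℂ] W))) +
      (LinearMap.single ℂ (fun _ : Fin (T + 1) => W) t.succ) ∘ₗ
        ((LinearMap.proj t.succ : (∀ _ : Fin (T + 1), W) →ₗ[ℂ] W) -
          ((U t).toLinearEquiv.toLinearMap ∘ₗ
            (LinearMap.proj t.castSucc : (∀ _ : Fin (T + 1), W) →ₗ[ℂ] W))))

/-- The input penalty `H_i = |0⟩⟨0| ⊗ ∑_{j ∈ A_in} P_j`. -/
def inputHam (T N : ℕ) (Ain : Finset (Fin N)) :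
    ((Fin (T + 1) → QubitSpace N) →ₗ[ℂ] (Fin (T + 1) → QubitSpace N)) :=
  (LinearMap.single ℂ (fun _ : Fin (T + 1) => QubitSpace N) 0) ∘ₗ
    (∑ j ∈ Ain, qubitOneProj N j) ∘ₗ
      (LinearMap.proj 0 : (∀ _ : Fin (T + 1), QubitSpace N) →ₗ[ℂ] QubitSpace N)

/-- The output penalty `H_o = |T⟩⟨T| ⊗ ∑_{j ∈ A_out} P_j`. -/
def outputHam (T N : ℕ) (Aout : Finset (Fin N)) :
    ((Fin (T + 1) → QubitSpace N) →ₗ[ℂ] (Fin (T + 1) → QubitSpace N)) :=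
  (LinearMap.single ℂ (fun _ : Fin (T + 1) => QubitSpace N) (Fin.last T)) ∘ₗ
    (∑ j ∈ Aout, qubitOneProj N j) ∘ₗ
      (LinearMap.proj (Fin.last T) :
        (∀ _ : Fin (T + 1), QubitSpace N) →ₗ[ℂ] QubitSpace N)

/-- The Kitaev Hamiltonian `H = H_i + H_p + H_o`. -/
def kitaevHam (T N : ℕ) (U : Fin T → (QubitSpace N ≃ₗᵢ[ℂ] QubitSpace N))
    (Ain Aout : Finset (Fin N)) :
    ((Fin (T + 1) → QubitSpace N) →ₗ[ℂ] (Fin (T + 1) → QubitSpace N)) :=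
  inputHam T N Ain + propHam T U + outputHam T N Aout

section Aux

local notation "⟪" x ", " y "⟫" => @inner ℂ _ _ x y

variable {W : Type*} [NormedAddCommGroup W] [InnerProductSpace ℂ W]

lemma histFun_zero (T : ℕ) (U : Fin T → (W ≃ₗᵢ[ℂ] W)) (n : ℕ) :
    histFun T U n (0 : W) = 0 := by
  induction n with
  | zero => rfl
  | succ n ih => by_cases h : n < T <;> simp [histFun, h, ih]

lemma histFun_smul (T : ℕ) (U : Fin T → (W ≃ₗᵢ[ℂ] W)) (n : ℕ) (c : ℂ) (ξ : W) :
    histFun T U n (c • ξ) = c • histFun T U n ξ := by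
  induction n with
  | zero => rfl
  | succ n ih => by_cases h : n < T <;> simp [histFun, h, ih]

lemma inner_qubitOneProj (N : ℕ) (j : Fin N) (x : QubitSpace N) :
    ⟪x, qubitOneProj N j x⟫ = ⟪qubitOneProj N j x, qubitOneProj N j x⟫ := by
  simp only [qubitOneProj, LinearMap.coe_mk, AddHom.coe_mk]
  rw [PiLp.inner_apply, PiLp.inner_apply]
  refine Finset.sum_congr rfl fun σ _ => ?_
  by_cases h : σ j = 1 <;> simp [h]

lemma sum_inner_single {ι : Type*} [Fintype ι] [DecidableEq ι]
    (ψ : ι → W) (a : ι) (v : W) :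
    ∑ s, ⟪ψ s, (Pi.single a v : ι → W) s⟫ = ⟪ψ a, v⟫ := by
  rw [Finset.sum_eq_single a]
  · simp
  · intro b _ hb; simp [Pi.single_eq_of_ne hb]
  · simp

lemma inner_prop_term (Ut : W ≃ₗᵢ[ℂ] W) (a b : W) :
    ⟪a, a - Ut.symm b⟫ + ⟪b, b - Ut a⟫ = ⟪b - Ut a, b - Ut a⟫ := by
  have h1 : ⟪Ut a, Ut a⟫ = ⟪a, a⟫ := Ut.inner_map_map a a
  have h2 : ⟪Ut a, b⟫ = ⟪a, Ut.symm b⟫ := by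
    conv_lhs => rw [← Ut.apply_symm_apply b]
    exact Ut.inner_map_map a (Ut.symm b)
  simp only [inner_sub_left, inner_sub_right, h1, h2]
  ring

end Aux

section Aux2

local notation "⟪" x ", " y "⟫" => @inner ℂ _ _ x y

variable {T N : ℕ}

lemma inputHam_apply (Ain : Finset (Fin N)) (ψ : Fin (T+1) → QubitSpace N) :
    inputHam T N Ain ψ =
      Pi.single (0 : Fin (T+1)) (∑ j ∈ Ain, qubitOneProj N j (ψ 0)) := by
  simp [inputHam, LinearMap.sum_apply]

lemma outputHam_apply (Aout : Finset (Fin N)) (ψ : Fin (T+1) → QubitSpace N) :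
    outputHam T N Aout ψ =
      Pi.single (Fin.last T) (∑ j ∈ Aout, qubitOneProj N j (ψ (Fin.last T))) := by
  simp [outputHam, LinearMap.sum_apply]

lemma propHam_apply {W : Type*} [NormedAddCommGroup W] [InnerProductSpace ℂ W]
    (U : Fin T → (W ≃ₗᵢ[ℂ] W)) (ψ : Fin (T+1) → W) :
    propHam T U ψ = (2:ℂ)⁻¹ • ∑ t : Fin T,
      ((Pi.single t.castSucc (ψ t.castSucc - (U t).symm (ψ t.succ)) : Fin (T+1) → W) +
       (Pi.single t.succ (ψ t.succ - U t (ψ t.castSucc)) : Fin (T+1) → W)) := by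
  simp [propHam, LinearMap.sum_apply]

lemma kitaev_quadratic (U : Fin T → (QubitSpace N ≃ₗᵢ[ℂ] QubitSpace N))
    (Ain Aout : Finset (Fin N)) (ψ : Fin (T+1) → QubitSpace N) :
    ∑ s, ⟪ψ s, kitaevHam T N U Ain Aout ψ s⟫ =
      (∑ j ∈ Ain, ⟪qubitOneProj N j (ψ 0), qubitOneProj N j (ψ 0)⟫)
      + (2:ℂ)⁻¹ * (∑ t : Fin T,
          ⟪ψ t.succ - U t (ψ t.castSucc), ψ t.succ - U t (ψ t.castSucc)⟫)
      + ∑ j ∈ Aout, ⟪qubitOneProj N j (ψ (Fin.last T)),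
          qubitOneProj N j (ψ (Fin.last T))⟫ := by
  have hin : ∑ s, ⟪ψ s, inputHam T N Ain ψ s⟫ =
      ∑ j ∈ Ain, ⟪qubitOneProj N j (ψ 0), qubitOneProj N j (ψ 0)⟫ := by
    simp only [inputHam_apply]
    rw [sum_inner_single, inner_sum]
    exact Finset.sum_congr rfl fun j _ => inner_qubitOneProj N j (ψ 0)
  have hout : ∑ s, ⟪ψ s, outputHam T N Aout ψ s⟫ =
      ∑ j ∈ Aout, ⟪qubitOneProj N j (ψ (Fin.last T)),
        qubitOneProj N j (ψ (Fin.last T))⟫ := by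
    simp only [outputHam_apply]
    rw [sum_inner_single, inner_sum]
    exact Finset.sum_congr rfl fun j _ => inner_qubitOneProj N j _
  have hprop : ∑ s, ⟪ψ s, propHam T U ψ s⟫ =
      (2:ℂ)⁻¹ * ∑ t : Fin T,
        ⟪ψ t.succ - U t (ψ t.castSucc), ψ t.succ - U t (ψ t.castSucc)⟫ := by
    simp only [propHam_apply, Pi.smul_apply, inner_smul_right, Finset.sum_apply,
      Pi.add_apply, inner_add_right, inner_sum]
    rw [← Finset.mul_sum]
    congr 1
    rw [Finset.sum_comm]
    refine Finset.sum_congr rfl fun t _ => ?_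
    rw [Finset.sum_add_distrib, sum_inner_single, sum_inner_single]
    exact inner_prop_term (U t) _ _
  simp only [kitaevHam, LinearMap.add_apply, Pi.add_apply, inner_add_right,
    Finset.sum_add_distrib, hin, hprop, hout]

end Aux2

section Aux3

local notation "⟪" x ", " y "⟫" => @inner ℂ _ _ x y

variable {T N : ℕ}

lemma kitaev_ker_iff (U : Fin T → (QubitSpace N ≃ₗᵢ[ℂ] QubitSpace N))
    (Ain Aout : Finset (Fin N)) (ψ : Fin (T+1) → QubitSpace N) :
    kitaevHam T N U Ain Aout ψ = 0 ↔
      ((∀ j ∈ Ain, qubitOneProj N j (ψ 0) = 0) ∧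
       (∀ t : Fin T, ψ t.succ = U t (ψ t.castSucc)) ∧
       (∀ j ∈ Aout, qubitOneProj N j (ψ (Fin.last T)) = 0)) := by
  constructor
  · intro h
    have hq := kitaev_quadratic U Ain Aout ψ
    rw [h] at hq
    simp only [Pi.zero_apply, inner_zero_right, Finset.sum_const, smul_zero] at hq
    -- rewrite everything as real norms
    have hq' : (0:ℂ) =
        (((∑ j ∈ Ain, ‖qubitOneProj N j (ψ 0)‖^2)
          + 2⁻¹ * (∑ t : Fin T, ‖ψ t.succ - U t (ψ t.castSucc)‖^2)
          + ∑ j ∈ Aout, ‖qubitOneProj N j (ψ (Fin.last T))‖^2 : ℝ) : ℂ) := by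
      rw [hq]
      push_cast
      simp only [inner_self_eq_norm_sq_to_K]
      norm_num
    rw [eq_comm, Complex.ofReal_eq_zero] at hq'
    have n1 : (0:ℝ) ≤ ∑ j ∈ Ain, ‖qubitOneProj N j (ψ 0)‖^2 :=
      Finset.sum_nonneg fun j _ => sq_nonneg _
    have n2 : (0:ℝ) ≤ ∑ t : Fin T, ‖ψ t.succ - U t (ψ t.castSucc)‖^2 :=
      Finset.sum_nonneg fun t _ => sq_nonneg _
    have n3 : (0:ℝ) ≤ ∑ j ∈ Aout, ‖qubitOneProj N j (ψ (Fin.last T))‖^2 :=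
      Finset.sum_nonneg fun j _ => sq_nonneg _
    have e1 : ∑ j ∈ Ain, ‖qubitOneProj N j (ψ 0)‖^2 = 0 := by linarith
    have e2 : ∑ t : Fin T, ‖ψ t.succ - U t (ψ t.castSucc)‖^2 = 0 := by linarith
    have e3 : ∑ j ∈ Aout, ‖qubitOneProj N j (ψ (Fin.last T))‖^2 = 0 := by linarith
    refine ⟨fun j hj => ?_, fun t => ?_, fun j hj => ?_⟩
    · have := (Finset.sum_eq_zero_iff_of_nonneg
        (fun j _ => sq_nonneg _)).1 e1 j hj
      simpa [pow_eq_zero_iff] using this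
    · have := (Finset.sum_eq_zero_iff_of_nonneg
        (fun (t : Fin T) _ => sq_nonneg ‖ψ t.succ - U t (ψ t.castSucc)‖)).1 e2 t
        (Finset.mem_univ t)
      have h0 : ψ t.succ - U t (ψ t.castSucc) = 0 := by
        simpa [pow_eq_zero_iff] using this
      exact sub_eq_zero.1 h0
    · have := (Finset.sum_eq_zero_iff_of_nonneg
        (fun j _ => sq_nonneg _)).1 e3 j hj
      simpa [pow_eq_zero_iff] using this
  · rintro ⟨h1, h2, h3⟩
    simp only [kitaevHam, LinearMap.add_apply]
    rw [inputHam_apply, outputHam_apply, propHam_apply]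
    rw [Finset.sum_eq_zero h1, Finset.sum_eq_zero h3]
    have : ∀ t : Fin T,
        ((Pi.single t.castSucc (ψ t.castSucc - (U t).symm (ψ t.succ))
            : Fin (T+1) → QubitSpace N) +
         (Pi.single t.succ (ψ t.succ - U t (ψ t.castSucc))
            : Fin (T+1) → QubitSpace N)) = 0 := by
      intro t
      have ha : ψ t.castSucc - (U t).symm (ψ t.succ) = 0 := by
        rw [h2 t]; simp
      have hb : ψ t.succ - U t (ψ t.castSucc) = 0 := by
        rw [h2 t]; simp
      rw [ha, hb]; simp
    rw [Finset.sum_congr rfl fun t _ => this t]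
    simp

lemma psi_eq_hist (U : Fin T → (QubitSpace N ≃ₗᵢ[ℂ] QubitSpace N))
    (ψ : Fin (T+1) → QubitSpace N)
    (hstep : ∀ t : Fin T, ψ t.succ = U t (ψ t.castSucc)) :
    ∀ n (hn : n ≤ T), ψ ⟨n, Nat.lt_succ_of_le hn⟩ = histFun T U n (ψ 0) := by
  intro n
  induction n with
  | zero => intro _; rfl
  | succ n ih =>
    intro h
    have hn : n < T := h
    have hs := hstep ⟨n, hn⟩
    have hcast : (⟨n, hn⟩ : Fin T).castSucc = ⟨n, Nat.lt_succ_of_le hn.le⟩ := rfl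
    have hsucc : (⟨n, hn⟩ : Fin T).succ = ⟨n+1, Nat.lt_succ_of_le h⟩ := rfl
    rw [hcast, hsucc] at hs
    rw [hs, ih hn.le]
    simp [histFun, hn]

end Aux3

/-- **Zero-energy states of the Kitaev Hamiltonian encode accepting computations.**
`ker H ≠ 0` iff some nonzero input `ξ` has correctly initialized ancillae and is
accepted with certainty; moreover the zero-energy states are exactly the history
states `(T+1)^{-1/2} ∑_t |t⟩ ⊗ U_t ⋯ U_1 ξ` of such inputs `ξ`. -/
theorem kitaevHam_kernel (T N : ℕ) (U : Fin T → (QubitSpace N ≃ₗᵢ[ℂ] QubitSpace N))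
    (Ain Aout : Finset (Fin N)) :
    ((LinearMap.ker (kitaevHam T N U Ain Aout) ≠ ⊥) ↔
      ∃ ξ : QubitSpace N, ξ ≠ 0 ∧ (∀ j ∈ Ain, qubitOneProj N j ξ = 0) ∧
        (∀ j ∈ Aout, qubitOneProj N j (histFun T U T ξ) = 0)) ∧
    ((LinearMap.ker (kitaevHam T N U Ain Aout) : Set (Fin (T + 1) → QubitSpace N)) =
      {ψ | ∃ ξ : QubitSpace N, (∀ j ∈ Ain, qubitOneProj N j ξ = 0) ∧
        (∀ j ∈ Aout, qubitOneProj N j (histFun T U T ξ) = 0) ∧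
        ψ = fun t => ((Real.sqrt (T + 1) : ℂ))⁻¹ • histFun T U t.val ξ}) := by
  have hcpos : (0:ℝ) < Real.sqrt (T + 1) := Real.sqrt_pos.2 (by positivity)
  have hc : ((Real.sqrt (T + 1) : ℂ)) ≠ 0 := by
    exact_mod_cast hcpos.ne'
  have hset : ((LinearMap.ker (kitaevHam T N U Ain Aout) :
        Set (Fin (T + 1) → QubitSpace N)) =
      {ψ | ∃ ξ : QubitSpace N, (∀ j ∈ Ain, qubitOneProj N j ξ = 0) ∧
        (∀ j ∈ Aout, qubitOneProj N j (histFun T U T ξ) = 0) ∧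
        ψ = fun t => ((Real.sqrt (T + 1) : ℂ))⁻¹ • histFun T U t.val ξ}) := by
    ext ψ
    simp only [SetLike.mem_coe, LinearMap.mem_ker, Set.mem_setOf_eq, kitaev_ker_iff]
    constructor
    · rintro ⟨h1, h2, h3⟩
      have hhist : ∀ t : Fin (T+1), ψ t = histFun T U t.val (ψ 0) := by
        intro t
        have := psi_eq_hist U ψ h2 t.val (Nat.lt_succ_iff.1 t.isLt)
        simpa using this
      refine ⟨(Real.sqrt (T+1) : ℂ) • ψ 0, ?_, ?_, ?_⟩
      · intro j hj; rw [map_smul, h1 j hj, smul_zero]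
      · intro j hj
        rw [histFun_smul, map_smul]
        have hl : histFun T U T (ψ 0) = ψ (Fin.last T) := (hhist (Fin.last T)).symm
        rw [hl, h3 j hj, smul_zero]
      · funext t
        rw [histFun_smul, inv_smul_smul₀ hc, ← hhist t]
    · rintro ⟨ξ, h1, h2, rfl⟩
      refine ⟨fun j hj => ?_, fun t => ?_, fun j hj => ?_⟩
      · simp only [Fin.val_zero, map_smul]
        rw [show histFun T U 0 ξ = ξ from rfl, h1 j hj, smul_zero]
      · simp only [Fin.val_succ, Fin.coe_castSucc, map_smul]
        congr 1
        simp [histFun, t.isLt]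
      · simp only [Fin.val_last, map_smul]
        rw [h2 j hj, smul_zero]
  refine ⟨?_, hset⟩
  rw [Submodule.ne_bot_iff]
  constructor
  · rintro ⟨ψ, hmem, hne⟩
    have hm : ψ ∈ (LinearMap.ker (kitaevHam T N U Ain Aout) :
        Set (Fin (T + 1) → QubitSpace N)) := hmem
    rw [hset] at hm
    obtain ⟨ξ, h1, h2, hψ⟩ := hm
    refine ⟨ξ, ?_, h1, h2⟩
    rintro rfl
    apply hne
    rw [hψ]
    funext t
    simp [histFun_zero]
  · rintro ⟨ξ, hξ, h1, h2⟩
    refine ⟨fun t => ((Real.sqrt (T + 1) : ℂ))⁻¹ • histFun T U t.val ξ, ?_, ?_⟩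
    · have hm : (fun t : Fin (T+1) =>
          ((Real.sqrt (T + 1) : ℂ))⁻¹ • histFun T U t.val ξ) ∈
          (LinearMap.ker (kitaevHam T N U Ain Aout) :
            Set (Fin (T + 1) → QubitSpace N)) := by
        rw [hset]; exact ⟨ξ, h1, h2, rfl⟩
      exact hm
    · intro h
      have h0 := congrFun h 0
      simp only [Fin.val_zero, Pi.zero_apply] at h0
      rw [show histFun T U 0 ξ = ξ from rfl] at h0
      rcases smul_eq_zero.1 h0 with h' | h'
      · exact (inv_ne_zero hc) h'
      · exact hξ h'

end
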